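/- Let Γ⁺ = {z ∈ ℂ : Im z ≥ 0, (Im z)² ≤ 1 + 2 Re z, (Im z)² ≤ 1 − 2 Re z} be the church window region. If γ is a closed curve (a continuous map γ : [0,1] → ℂ with γ(0) = γ(1)) that is T-brimful for Γ⁺ — that is, there exists v ∈ ℂ with {γ(t) + v : t ∈ [0,1]} ⊆ Γ⁺, but for every real λ with 0 < λ < 1 there is no w ∈ ℂ with {γ(t) + w : t ∈ [0,1]} ⊆ λ·Γ⁺ (the dilate of Γ⁺ by factor λ about the origin) — then the arc length (total variation of γ on [0,1]) of γ is at least 2. -/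

import Mathlib

open Set

/-- The church window region Γ⁺, bounded below by the x-axis and by the parabolas
y² = 1 + 2x and y² = 1 − 2x. -/
def churchWindow : Set ℂ :=
  {z : ℂ | 0 ≤ z.im ∧ z.im ^ 2 ≤ 1 + 2 * z.re ∧ z.im ^ 2 ≤ 1 - 2 * z.re}


private lemma key_alg {X Y Y' lam A B : ℝ}
    (hA : A ^ 2 = X ^ 2 + (Y + Y') ^ 2) (hB : B ^ 2 = X ^ 2 + (Y - Y') ^ 2)
    (hA0 : 0 ≤ A) (hB0 : 0 ≤ B) (hsum : A + B ≤ 2 * lam) :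
    Y ^ 2 + Y' ^ 2 + 2 * lam * |X| ≤ 2 * lam ^ 2 := by
  have hwA : |X| ≤ A := by
    apply le_of_pow_le_pow_left₀ two_ne_zero hA0
    rw [sq_abs]; nlinarith [sq_nonneg (Y + Y')]
  have hwB : |X| ≤ B := by
    apply le_of_pow_le_pow_left₀ two_ne_zero hB0
    rw [sq_abs]; nlinarith [sq_nonneg (Y - Y')]
  have h1 : 0 ≤ (A - |X|) * (B - |X|) := mul_nonneg (by linarith) (by linarith)
  have h2 : 0 ≤ (2*lam - (A+B)) * (2*lam + A + B - 2*|X|) :=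
    mul_nonneg (by linarith) (by linarith)
  nlinarith [sq_abs X]

private lemma perim_sorted (γ : ℝ → ℂ) (hclosed : γ 0 = γ 1) {a b c : ℝ}
    (ha : a ∈ Icc (0:ℝ) 1) (hb : b ∈ Icc (0:ℝ) 1) (hc : c ∈ Icc (0:ℝ) 1)
    (hab : a ≤ b) (hbc : b ≤ c) :
    edist (γ a) (γ b) + edist (γ b) (γ c) + edist (γ a) (γ c)
      ≤ eVariationOn γ (Icc 0 1) := by
  set s : Set ℝ := Icc 0 1 with hs
  have h0 : (0:ℝ) ∈ s := left_mem_Icc.2 zero_le_one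
  have h1 : (1:ℝ) ∈ s := right_mem_Icc.2 zero_le_one
  have e1 : edist (γ 0) (γ a) ≤ eVariationOn γ (s ∩ Icc 0 a) :=
    eVariationOn.edist_le γ ⟨h0, le_refl 0, ha.1⟩ ⟨ha, ha.1, le_refl a⟩
  have e2 : edist (γ a) (γ b) ≤ eVariationOn γ (s ∩ Icc a b) :=
    eVariationOn.edist_le γ ⟨ha, le_refl a, hab⟩ ⟨hb, hab, le_refl b⟩
  have e3 : edist (γ b) (γ c) ≤ eVariationOn γ (s ∩ Icc b c) :=
    eVariationOn.edist_le γ ⟨hb, le_refl b, hbc⟩ ⟨hc, hbc, le_refl c⟩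
  have e4 : edist (γ c) (γ 1) ≤ eVariationOn γ (s ∩ Icc c 1) :=
    eVariationOn.edist_le γ ⟨hc, le_refl c, hc.2⟩ ⟨h1, hc.2, le_refl 1⟩
  have htri : edist (γ a) (γ c) ≤ edist (γ 0) (γ a) + edist (γ c) (γ 1) := by
    calc edist (γ a) (γ c) ≤ edist (γ a) (γ 0) + edist (γ 0) (γ c) := edist_triangle _ _ _
    _ = edist (γ 0) (γ a) + edist (γ c) (γ 1) := by
        rw [edist_comm (γ a) (γ 0)]; rw [hclosed]; rw [edist_comm (γ 1) (γ c)]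
  have E1 : eVariationOn γ (s ∩ Icc 0 a) + eVariationOn γ (s ∩ Icc a b)
      = eVariationOn γ (s ∩ Icc 0 b) := eVariationOn.Icc_add_Icc γ ha.1 hab ha
  have E2 : eVariationOn γ (s ∩ Icc 0 b) + eVariationOn γ (s ∩ Icc b c)
      = eVariationOn γ (s ∩ Icc 0 c) := eVariationOn.Icc_add_Icc γ hb.1 hbc hb
  have E3 : eVariationOn γ (s ∩ Icc 0 c) + eVariationOn γ (s ∩ Icc c 1)
      = eVariationOn γ (s ∩ Icc 0 1) := eVariationOn.Icc_add_Icc γ hc.1 hc.2 hc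
  calc edist (γ a) (γ b) + edist (γ b) (γ c) + edist (γ a) (γ c)
      ≤ eVariationOn γ (s ∩ Icc a b) + eVariationOn γ (s ∩ Icc b c)
        + (eVariationOn γ (s ∩ Icc 0 a) + eVariationOn γ (s ∩ Icc c 1)) := by
        exact add_le_add (add_le_add e2 e3) (htri.trans (add_le_add e1 e4))
    _ = eVariationOn γ (s ∩ Icc 0 1) := by rw [← E3, ← E2, ← E1]; ring
    _ = eVariationOn γ (Icc 0 1) := by rw [hs, Set.inter_self]

private lemma perimR_sorted (γ : ℝ → ℂ) (hclosed : γ 0 = γ 1)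
    (hfin : eVariationOn γ (Icc 0 1) ≠ ⊤) {a b c : ℝ}
    (ha : a ∈ Icc (0:ℝ) 1) (hb : b ∈ Icc (0:ℝ) 1) (hc : c ∈ Icc (0:ℝ) 1)
    (hab : a ≤ b) (hbc : b ≤ c) :
    dist (γ a) (γ b) + dist (γ b) (γ c) + dist (γ a) (γ c)
      ≤ (eVariationOn γ (Icc 0 1)).toReal := by
  have h := perim_sorted γ hclosed ha hb hc hab hbc
  have h2 := ENNReal.toReal_mono hfin h
  rw [ENNReal.toReal_add (ENNReal.add_ne_top.2 ⟨edist_ne_top _ _, edist_ne_top _ _⟩)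
    (edist_ne_top _ _), ENNReal.toReal_add (edist_ne_top _ _) (edist_ne_top _ _)] at h2
  simpa [dist_edist] using h2

private lemma perimR (γ : ℝ → ℂ) (hclosed : γ 0 = γ 1)
    (hfin : eVariationOn γ (Icc 0 1) ≠ ⊤) {a b c : ℝ}
    (ha : a ∈ Icc (0:ℝ) 1) (hb : b ∈ Icc (0:ℝ) 1) (hc : c ∈ Icc (0:ℝ) 1) :
    dist (γ a) (γ b) + dist (γ b) (γ c) + dist (γ a) (γ c)
      ≤ (eVariationOn γ (Icc 0 1)).toReal := by
  rcases le_total a b with h1 | h1 <;> rcases le_total b c with h2 | h2 <;>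
    rcases le_total a c with h3 | h3
  · linarith [perimR_sorted γ hclosed hfin ha hb hc h1 h2]
  · linarith [perimR_sorted γ hclosed hfin ha hb hc h1 h2]
  · linarith [perimR_sorted γ hclosed hfin ha hc hb h3 h2,
      dist_comm (γ b) (γ c), dist_comm (γ a) (γ c)]
  · linarith [perimR_sorted γ hclosed hfin hc ha hb h3 h1,
      dist_comm (γ a) (γ b), dist_comm (γ b) (γ c), dist_comm (γ a) (γ c),
      dist_comm (γ c) (γ a), dist_comm (γ c) (γ b), dist_comm (γ b) (γ a)]
  · linarith [perimR_sorted γ hclosed hfin hb ha hc h1 h3,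
      dist_comm (γ a) (γ b), dist_comm (γ b) (γ a)]
  · linarith [perimR_sorted γ hclosed hfin hb hc ha h2 h3,
      dist_comm (γ a) (γ b), dist_comm (γ b) (γ c), dist_comm (γ a) (γ c),
      dist_comm (γ c) (γ a), dist_comm (γ c) (γ b), dist_comm (γ b) (γ a)]
  · linarith [perimR_sorted γ hclosed hfin hc hb ha h2 h1,
      dist_comm (γ a) (γ b), dist_comm (γ b) (γ c), dist_comm (γ a) (γ c),
      dist_comm (γ c) (γ a), dist_comm (γ c) (γ b), dist_comm (γ b) (γ a)]
  · linarith [perimR_sorted γ hclosed hfin hc hb ha h2 h1,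
      dist_comm (γ a) (γ b), dist_comm (γ b) (γ c), dist_comm (γ a) (γ c),
      dist_comm (γ c) (γ a), dist_comm (γ c) (γ b), dist_comm (γ b) (γ a)]

set_option maxHeartbeats 1000000 in
/-- Any closed curve that is T-brimful for the church window has length at least 2. -/
theorem brimful_curve_length_ge_two (γ : ℝ → ℂ)
    (hcont : ContinuousOn γ (Set.Icc 0 1)) (hclosed : γ 0 = γ 1)
    (hin : ∃ v : ℂ, (fun t => γ t + v) '' Set.Icc 0 1 ⊆ churchWindow)
    (hbrim : ∀ l : ℝ, 0 < l → l < 1 →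
      ¬ ∃ w : ℂ, (fun t => γ t + w) '' Set.Icc 0 1 ⊆
        (fun z => (l : ℂ) * z) '' churchWindow) :
    2 ≤ eVariationOn γ (Set.Icc 0 1) := by
  by_contra hcon
  push_neg at hcon
  obtain ⟨v, hv⟩ := hin
  have hfin : eVariationOn γ (Set.Icc 0 1) ≠ ⊤ := ne_top_of_lt hcon
  set L : ℝ := (eVariationOn γ (Set.Icc 0 1)).toReal with hLdef
  have hL2 : L < 2 := by
    have := (ENNReal.toReal_lt_toReal hfin (by simp : (2 : ENNReal) ≠ ⊤)).2 hcon
    simpa using this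
  set δ : ℝ → ℂ := fun t => γ t + v with hδ
  have hδmem : ∀ t ∈ Set.Icc (0:ℝ) 1, δ t ∈ churchWindow := fun t ht => hv ⟨t, ht, rfl⟩
  have hδcont : ContinuousOn (fun t => (δ t).im) (Set.Icc 0 1) :=
    Complex.continuous_im.comp_continuousOn (hcont.add continuousOn_const)
  obtain ⟨t₀, ht₀, hmin⟩ := isCompact_Icc.exists_isMinOn
    ⟨0, left_mem_Icc.2 zero_le_one⟩ hδcont
  set m : ℝ := (δ t₀).im with hm
  have hm0 : 0 ≤ m := (hδmem t₀ ht₀).1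
  have hmle : ∀ t ∈ Icc (0:ℝ) 1, m ≤ (δ t).im := fun t ht => hmin ht
  set lam : ℝ := max (L/2) (1/2) with hlamdef
  have hlam0 : 0 < lam := lt_of_lt_of_le (by norm_num) (le_max_right _ _)
  have hlam1 : lam < 1 := max_lt (by linarith) (by norm_num)
  have hLlam : L ≤ 2 * lam := by
    have := le_max_left (L/2) (1/2); linarith
  have hdγ : ∀ s s' : ℝ, dist (δ s) (δ s') = dist (γ s) (γ s') := by
    intro s s'; simp [hδ, dist_add_right]
  -- pair inequality
  have pair : ∀ t ∈ Icc (0:ℝ) 1, ∀ t' ∈ Icc (0:ℝ) 1,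
      ((δ t).im - m)^2 + ((δ t').im - m)^2
        ≤ 2*lam^2 + 2*lam*((δ t).re - (δ t').re) := by
    intro t ht t' ht'
    set r : ℂ := (starRingEnd ℂ) (δ t') + 2*(m:ℂ)*Complex.I with hr
    have hrre : r.re = (δ t').re := by simp [hr]
    have hrim : r.im = 2*m - (δ t').im := by simp [hr]; ring
    have hA2 : (dist (δ t) r)^2
        = ((δ t).re - (δ t').re)^2 + (((δ t).im - m) + ((δ t').im - m))^2 := by
      rw [Complex.dist_eq_re_im, Real.sq_sqrt (by positivity), hrre, hrim]; ring
    have hB2 : (dist (δ t) (δ t'))^2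
        = ((δ t).re - (δ t').re)^2 + (((δ t).im - m) - ((δ t').im - m))^2 := by
      rw [Complex.dist_eq_re_im, Real.sq_sqrt (by positivity)]; ring
    have heq : dist (δ t₀) r = dist (δ t₀) (δ t') := by
      rw [Complex.dist_eq_re_im, Complex.dist_eq_re_im, hrre, hrim]
      congr 1; ring
    have hABle : dist (δ t) r + dist (δ t) (δ t') ≤ 2*lam := by
      have htri : dist (δ t) r ≤ dist (δ t) (δ t₀) + dist (δ t₀) r := dist_triangle _ _ _
      have hperim := perimR γ hclosed hfin ht ht₀ ht'
      rw [← hdγ t t₀, ← hdγ t₀ t', ← hdγ t t'] at hperim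
      rw [heq] at htri
      linarith
    have hkey := key_alg hA2 hB2 dist_nonneg dist_nonneg hABle
    have habs : -|(δ t).re - (δ t').re| ≤ (δ t).re - (δ t').re :=
      neg_abs_le _
    nlinarith [mul_le_mul_of_nonneg_left habs (by linarith : (0:ℝ) ≤ 2*lam)]
  -- construct the horizontal shift u
  have hhcont : ContinuousOn
      (fun t => (((δ t).im - m)^2 - lam^2)/(2*lam) - (δ t).re) (Icc 0 1) := by
    apply ContinuousOn.sub
    · exact ((hδcont.sub continuousOn_const).pow 2 |>.sub continuousOn_const).div_const _
    · exact Complex.continuous_re.comp_continuousOn (hcont.add continuousOn_const)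
  obtain ⟨t₁, ht₁, hmax⟩ := isCompact_Icc.exists_isMaxOn
    ⟨0, left_mem_Icc.2 zero_le_one⟩ hhcont
  set u : ℝ := (((δ t₁).im - m)^2 - lam^2)/(2*lam) - (δ t₁).re with hu
  have h2lu : 2*lam*u = ((δ t₁).im - m)^2 - lam^2 - 2*lam*(δ t₁).re := by
    rw [hu]; field_simp
  refine hbrim lam hlam0 hlam1 ⟨v + (u:ℂ) - (m:ℂ)*Complex.I, ?_⟩
  rintro ζ ⟨t, ht, rfl⟩
  have hy : m ≤ (δ t).im := hmle t ht
  have hu1 : (((δ t).im - m)^2 - lam^2)/(2*lam) - (δ t).re ≤ u := hmax ht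
  have hu1' : ((δ t).im - m)^2 - lam^2 ≤ 2*lam*(u + (δ t).re) := by
    have h' : (((δ t).im - m)^2 - lam^2)/(2*lam) ≤ u + (δ t).re := by linarith
    have h'' := (div_le_iff₀ (by positivity : (0:ℝ) < 2*lam)).1 h'
    nlinarith [h'']
  have hu2 : 2*lam*u ≤ lam^2 - ((δ t).im - m)^2 - 2*lam*(δ t).re := by
    have hp := pair t₁ ht₁ t ht
    linarith [h2lu]
  -- the witness point in churchWindow
  have hz : γ t + (v + (u:ℂ) - (m:ℂ)*Complex.I) = δ t + (u:ℂ) - (m:ℂ)*Complex.I := by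
    rw [hδ]; ring
  have hre : ((δ t + (u:ℂ) - (m:ℂ)*Complex.I) / (lam:ℂ)).re = ((δ t).re + u)/lam := by
    simp
  have him : ((δ t + (u:ℂ) - (m:ℂ)*Complex.I) / (lam:ℂ)).im = ((δ t).im - m)/lam := by
    simp
  refine ⟨(δ t + (u:ℂ) - (m:ℂ)*Complex.I) / (lam:ℂ), ⟨?_, ?_, ?_⟩, ?_⟩
  · rw [him]; exact div_nonneg (by linarith) hlam0.le
  · rw [him, hre, div_pow, div_le_iff₀ (by positivity : (0:ℝ) < lam^2)]
    have hexp : (1 + 2*(((δ t).re + u)/lam))*lam^2 = lam^2 + 2*lam*((δ t).re + u) := by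
      field_simp
    rw [hexp]
    nlinarith [hu1']
  · rw [him, hre, div_pow, div_le_iff₀ (by positivity : (0:ℝ) < lam^2)]
    have hexp : (1 - 2*(((δ t).re + u)/lam))*lam^2 = lam^2 - 2*lam*((δ t).re + u) := by
      field_simp
    rw [hexp]
    nlinarith [hu2]
  · show (lam:ℂ) * ((δ t + (u:ℂ) - (m:ℂ)*Complex.I) / (lam:ℂ))
        = γ t + (v + (u:ℂ) - (m:ℂ)*Complex.I)
    rw [hz, mul_div_cancel₀ _ (Complex.ofReal_ne_zero.2 hlam0.ne')]
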